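/- For every real number n ≥ 1, the series ∑_{l=1}^{∞} e^{4π√(nl) − √3·π·l} converges and satisfies ∑_{l=1}^{∞} e^{4π√(nl) − √3·π·l} ≤ ∫_{1}^{∞} e^{4π√(nμ) − √3·π·μ} dμ + e^{4πn/√3}. -/

import Mathlib

open Real MeasureTheory

section stmt1aux
variable {n : ℝ}

private lemma s3_pos : (0:ℝ) < Real.sqrt 3 := Real.sqrt_pos.2 (by norm_num)

private lemma sqrt3y_le (y n : ℝ) (hy0 : 0 ≤ y) (hy : y ≤ 4 * n / 3) :
    Real.sqrt 3 * Real.sqrt y ≤ 2 * Real.sqrt n := by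
  rw [← Real.sqrt_mul (by norm_num : (0:ℝ) ≤ 3) y,
    show (2:ℝ) * Real.sqrt n = Real.sqrt (4 * n) by
      rw [Real.sqrt_mul (by norm_num : (0:ℝ) ≤ 4) n,
        show (4:ℝ) = 2^2 by norm_num, Real.sqrt_sq (by norm_num : (0:ℝ) ≤ 2)]]
  exact Real.sqrt_le_sqrt (by linarith)

private lemma sqrt3y_ge (y n : ℝ) (hy : 4 * n / 3 ≤ y) :
    2 * Real.sqrt n ≤ Real.sqrt 3 * Real.sqrt y := by
  rw [← Real.sqrt_mul (by norm_num : (0:ℝ) ≤ 3) y,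
    show (2:ℝ) * Real.sqrt n = Real.sqrt (4 * n) by
      rw [Real.sqrt_mul (by norm_num : (0:ℝ) ≤ 4) n,
        show (4:ℝ) = 2^2 by norm_num, Real.sqrt_sq (by norm_num : (0:ℝ) ≤ 2)]]
  exact Real.sqrt_le_sqrt (by linarith)

private lemma aux_mono (hn : 1 ≤ n) :
    MonotoneOn (fun μ : ℝ => Real.exp (4 * π * Real.sqrt (n * μ) - Real.sqrt 3 * π * μ))
      (Set.Icc 0 (4 * n / 3)) := by
  intro x hx y hy hxy
  have hn0 : (0:ℝ) ≤ n := by linarith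
  simp only
  apply Real.exp_le_exp.2
  rw [Real.sqrt_mul hn0, Real.sqrt_mul hn0]
  have hsx : Real.sqrt x ^ 2 = x := Real.sq_sqrt hx.1
  have hsy : Real.sqrt y ^ 2 = y := Real.sq_sqrt hy.1
  have hxy' : Real.sqrt x ≤ Real.sqrt y := Real.sqrt_le_sqrt hxy
  have hb : Real.sqrt 3 * Real.sqrt y ≤ 2 * Real.sqrt n := sqrt3y_le y n hy.1 hy.2
  have hkey : 0 ≤ π * (Real.sqrt y - Real.sqrt x) *
      (4 * Real.sqrt n - Real.sqrt 3 * (Real.sqrt y + Real.sqrt x)) := by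
    apply mul_nonneg (mul_nonneg pi_pos.le (by linarith))
    have : Real.sqrt 3 * Real.sqrt x ≤ Real.sqrt 3 * Real.sqrt y :=
      mul_le_mul_of_nonneg_left hxy' s3_pos.le
    linarith
  have expand : 4 * π * (Real.sqrt n * Real.sqrt y) - Real.sqrt 3 * π * y -
      (4 * π * (Real.sqrt n * Real.sqrt x) - Real.sqrt 3 * π * x) =
      π * (Real.sqrt y - Real.sqrt x) *
        (4 * Real.sqrt n - Real.sqrt 3 * (Real.sqrt y + Real.sqrt x)) := by
    linear_combination Real.sqrt 3 * π * hsy - Real.sqrt 3 * π * hsx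
  linarith

private lemma aux_anti (hn : 1 ≤ n) :
    AntitoneOn (fun μ : ℝ => Real.exp (4 * π * Real.sqrt (n * μ) - Real.sqrt 3 * π * μ))
      (Set.Ici (4 * n / 3)) := by
  intro x hx y hy hxy
  have hn0 : (0:ℝ) ≤ n := by linarith
  have hx0 : (0:ℝ) ≤ x := le_trans (by linarith) hx
  have hy0 : (0:ℝ) ≤ y := le_trans (by linarith) hy
  simp only
  apply Real.exp_le_exp.2
  rw [Real.sqrt_mul hn0, Real.sqrt_mul hn0]
  have hsx : Real.sqrt x ^ 2 = x := Real.sq_sqrt hx0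
  have hsy : Real.sqrt y ^ 2 = y := Real.sq_sqrt hy0
  have hxy' : Real.sqrt x ≤ Real.sqrt y := Real.sqrt_le_sqrt hxy
  have hb : 2 * Real.sqrt n ≤ Real.sqrt 3 * Real.sqrt x := sqrt3y_ge x n hx
  have hkey : 0 ≤ π * (Real.sqrt y - Real.sqrt x) *
      (Real.sqrt 3 * (Real.sqrt y + Real.sqrt x) - 4 * Real.sqrt n) := by
    apply mul_nonneg (mul_nonneg pi_pos.le (by linarith))
    have : Real.sqrt 3 * Real.sqrt x ≤ Real.sqrt 3 * Real.sqrt y :=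
      mul_le_mul_of_nonneg_left hxy' s3_pos.le
    linarith
  have expand : 4 * π * (Real.sqrt n * Real.sqrt x) - Real.sqrt 3 * π * x -
      (4 * π * (Real.sqrt n * Real.sqrt y) - Real.sqrt 3 * π * y) =
      π * (Real.sqrt y - Real.sqrt x) *
        (Real.sqrt 3 * (Real.sqrt y + Real.sqrt x) - 4 * Real.sqrt n) := by
    linear_combination Real.sqrt 3 * π * hsx - Real.sqrt 3 * π * hsy
  linarith

private lemma aux_sup (hn : 1 ≤ n) (x : ℝ) (hx : 0 ≤ x) :
    Real.exp (4 * π * Real.sqrt (n * x) - Real.sqrt 3 * π * x) ≤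
      Real.exp (4 * π * n / Real.sqrt 3) := by
  have hn0 : (0:ℝ) ≤ n := by linarith
  apply Real.exp_le_exp.2
  rw [Real.sqrt_mul hn0]
  have hsx : Real.sqrt x ^ 2 = x := Real.sq_sqrt hx
  have hsn : Real.sqrt n ^ 2 = n := Real.sq_sqrt hn0
  have hs3 : Real.sqrt 3 ^ 2 = 3 := Real.sq_sqrt (by norm_num)
  have key : 0 ≤ π * (Real.sqrt 3 * Real.sqrt x - 2 * Real.sqrt n)^2 := by positivity
  have expand : 4 * π * n -
      Real.sqrt 3 * (4 * π * (Real.sqrt n * Real.sqrt x) - Real.sqrt 3 * π * x) =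
      π * (Real.sqrt 3 * Real.sqrt x - 2 * Real.sqrt n)^2 := by
    linear_combination (-4) * π * hsn - π * Real.sqrt 3 ^ 2 * hsx
  rw [le_div_iff₀ s3_pos]
  nlinarith [key, expand]

private lemma aux_bound (hn : 1 ≤ n) (x : ℝ) (hx : 0 ≤ x) :
    Real.exp (4 * π * Real.sqrt (n * x) - Real.sqrt 3 * π * x) ≤
      Real.exp (8 * π * n / Real.sqrt 3) * Real.exp (-(Real.sqrt 3 * π / 2) * x) := by
  rw [← Real.exp_add]
  have hn0 : (0:ℝ) ≤ n := by linarith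
  apply Real.exp_le_exp.2
  rw [Real.sqrt_mul hn0]
  have hsx : Real.sqrt x ^ 2 = x := Real.sq_sqrt hx
  have hsn : Real.sqrt n ^ 2 = n := Real.sq_sqrt hn0
  have hs3 : Real.sqrt 3 ^ 2 = 3 := Real.sq_sqrt (by norm_num)
  have key : 0 ≤ π / 2 * (Real.sqrt 3 * Real.sqrt x - 4 * Real.sqrt n)^2 := by positivity
  have expand : Real.sqrt 3 * (Real.sqrt 3 * π / 2 * x) + 8 * π * n -
      Real.sqrt 3 * (4 * π * (Real.sqrt n * Real.sqrt x)) =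
      π / 2 * (Real.sqrt 3 * Real.sqrt x - 4 * Real.sqrt n)^2 := by
    linear_combination (-8) * π * hsn - π / 2 * Real.sqrt 3 ^ 2 * hsx
  have key2 : Real.sqrt 3 * (4 * π * (Real.sqrt n * Real.sqrt x) - Real.sqrt 3 * π * x) ≤
      Real.sqrt 3 * (8 * π * n / Real.sqrt 3 + -(Real.sqrt 3 * π / 2) * x) := by
    have h3 : Real.sqrt 3 * (8 * π * n / Real.sqrt 3) = 8 * π * n := by
      field_simp
    nlinarith [key, expand, h3, pi_pos, s3_pos, hsx]
  exact (mul_le_mul_iff_right₀ s3_pos).1 key2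

private lemma aux_cont (n : ℝ) :
    Continuous (fun μ : ℝ => Real.exp (4 * π * Real.sqrt (n * μ) - Real.sqrt 3 * π * μ)) := by
  fun_prop

private lemma aux_integrableOn (hn : 1 ≤ n) :
    IntegrableOn (fun μ : ℝ => Real.exp (4 * π * Real.sqrt (n * μ) - Real.sqrt 3 * π * μ))
      (Set.Ici 1) := by
  rw [integrableOn_Ici_iff_integrableOn_Ioi]
  have hg : IntegrableOn
      (fun x : ℝ => Real.exp (8 * π * n / Real.sqrt 3) * Real.exp (-(Real.sqrt 3 * π / 2) * x))
      (Set.Ioi 1) :=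
    (exp_neg_integrableOn_Ioi 1 (by positivity : (0:ℝ) < Real.sqrt 3 * π / 2)).const_mul _
  apply Integrable.mono' hg ((aux_cont n).aestronglyMeasurable.restrict)
  filter_upwards [ae_restrict_mem measurableSet_Ioi] with x hx
  rw [Real.norm_eq_abs, abs_of_pos (Real.exp_pos _)]
  exact aux_bound hn x (by linarith [Set.mem_Ioi.1 hx])

private lemma aux_summable (hn : 1 ≤ n) :
    Summable (fun l : ℕ =>
      Real.exp (4 * π * Real.sqrt (n * (l + 1)) - Real.sqrt 3 * π * (l + 1))) := by
  refine Summable.of_nonneg_of_le (fun l => (Real.exp_pos _).le)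
    (fun l : ℕ => aux_bound hn ((l:ℝ) + 1) (by positivity)) ?_
  apply Summable.mul_left
  have heq : ∀ l : ℕ, Real.exp (-(Real.sqrt 3 * π / 2) * ((l:ℝ) + 1)) =
      Real.exp (-(Real.sqrt 3 * π / 2)) * Real.exp (-(Real.sqrt 3 * π / 2)) ^ (l:ℕ) := by
    intro l
    rw [← Real.exp_nat_mul, ← Real.exp_add]
    ring_nf
  simp only [heq]
  apply Summable.mul_left
  exact summable_geometric_of_lt_one (Real.exp_pos _).le
    (Real.exp_lt_one_iff.2 (neg_lt_zero.2 (by positivity)))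

private lemma aux_main (hn : 1 ≤ n) :
    ∑' l : ℕ, Real.exp (4 * π * Real.sqrt (n * (l + 1)) - Real.sqrt 3 * π * (l + 1)) ≤
      (∫ μ in Set.Ici (1 : ℝ), Real.exp (4 * π * Real.sqrt (n * μ) - Real.sqrt 3 * π * μ)) +
        Real.exp (4 * π * n / Real.sqrt 3) := by
  set f : ℝ → ℝ := fun μ => Real.exp (4 * π * Real.sqrt (n * μ) - Real.sqrt 3 * π * μ) with hfdef
  show (∑' l : ℕ, f ((l:ℝ) + 1)) ≤ (∫ μ in Set.Ici (1:ℝ), f μ) + Real.exp (4 * π * n / Real.sqrt 3)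
  have hfpos : ∀ x : ℝ, 0 < f x := fun x => Real.exp_pos _
  have hcont : Continuous f := aux_cont n
  have hm1 : 1 ≤ ⌊4 * n / 3⌋₊ := Nat.le_floor (by push_cast; linarith)
  obtain ⟨p, hp⟩ : ∃ p, ⌊4 * n / 3⌋₊ = p + 1 :=
    ⟨⌊4 * n / 3⌋₊ - 1, (Nat.succ_pred_eq_of_pos hm1).symm⟩
  have hmc : ((p:ℝ) + 1) ≤ 4 * n / 3 := by
    have h := Nat.floor_le (show (0:ℝ) ≤ 4 * n / 3 by linarith)
    rw [hp] at h; push_cast at h; linarith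
  have hcm : 4 * n / 3 < (p:ℝ) + 2 := by
    have h := Nat.lt_floor_add_one (4 * n / 3)
    rw [hp] at h; push_cast at h; linarith
  have L : Summable (fun l : ℕ => f ((l:ℝ) + 1)) := aux_summable hn
  rw [← Summable.sum_add_tsum_nat_add (p + 2) L, Finset.sum_range_succ, Finset.sum_range_succ]
  -- Part A : head monotone sum
  have hA : (∑ l ∈ Finset.range p, f ((l:ℝ) + 1)) ≤ ∫ x in (1:ℝ)..(1 + (p:ℕ)), f x := by
    have hmono : MonotoneOn f (Set.Icc (1:ℝ) (1 + (p:ℕ))) :=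
      (aux_mono hn).mono (Set.Icc_subset_Icc (by norm_num) (by push_cast; linarith))
    simpa [add_comm] using hmono.sum_le_integral
  -- Part B : the two middle terms
  have hBmin : ∀ x ∈ Set.Icc ((p:ℝ) + 1) ((p:ℝ) + 2),
      min (f ((p:ℝ) + 1)) (f ((p:ℝ) + 2)) ≤ f x := by
    intro x hx
    rcases le_total x (4 * n / 3) with h | h
    · refine le_trans (min_le_left _ _) ((aux_mono hn) ?_ ?_ hx.1)
      · exact ⟨by positivity, hmc⟩
      · exact ⟨by nlinarith [hx.1], h⟩
    · exact le_trans (min_le_right _ _) ((aux_anti hn) h (Set.mem_Ici.2 hcm.le) hx.2)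
  have hB : f ((p:ℝ) + 1) + f ((p:ℝ) + 2) ≤
      (∫ x in ((p:ℝ) + 1)..((p:ℝ) + 2), f x) + Real.exp (4 * π * n / Real.sqrt 3) := by
    have hmin : min (f ((p:ℝ) + 1)) (f ((p:ℝ) + 2)) ≤ ∫ x in ((p:ℝ) + 1)..((p:ℝ) + 2), f x := by
      have hconst : (∫ _x in ((p:ℝ) + 1)..((p:ℝ) + 2),
          min (f ((p:ℝ) + 1)) (f ((p:ℝ) + 2))) = min (f ((p:ℝ) + 1)) (f ((p:ℝ) + 2)) := by
        rw [intervalIntegral.integral_const]; ring_nf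
      rw [← hconst]
      exact intervalIntegral.integral_mono_on (by linarith) intervalIntegrable_const
        (hcont.intervalIntegrable _ _) hBmin
    have hmax : max (f ((p:ℝ) + 1)) (f ((p:ℝ) + 2)) ≤ Real.exp (4 * π * n / Real.sqrt 3) :=
      max_le (aux_sup hn _ (by positivity)) (aux_sup hn _ (by positivity))
    have := min_add_max (f ((p:ℝ) + 1)) (f ((p:ℝ) + 2))
    linarith
  -- Part C : the antitone tail
  have hC : (∑' i : ℕ, f (((i + (p + 2) : ℕ) : ℝ) + 1)) ≤ ∫ x in Set.Ici ((p:ℝ) + 2), f x := by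
    have hint : IntegrableOn f (Set.Ici ((p:ℝ) + 2)) :=
      (aux_integrableOn hn).mono_set (Set.Ici_subset_Ici.2 (by linarith))
    apply Real.tsum_le_of_sum_range_le (fun i => (hfpos _).le)
    intro N
    have hanti : AntitoneOn f (Set.Icc ((p:ℝ) + 2) (((p:ℝ) + 2) + (N:ℕ))) :=
      (aux_anti hn).mono (fun x hx => le_trans hcm.le hx.1)
    have h1 := hanti.sum_le_integral
    have heq : ∀ i : ℕ, f ((((i + (p + 2) : ℕ)) : ℝ) + 1) = f (((p:ℝ) + 2) + ((i + 1 : ℕ) : ℝ)) := by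
      intro i; push_cast; ring_nf
    calc (∑ i ∈ Finset.range N, f (((i + (p + 2) : ℕ) : ℝ) + 1))
        = ∑ i ∈ Finset.range N, f (((p:ℝ) + 2) + ((i + 1 : ℕ) : ℝ)) := by
          exact Finset.sum_congr rfl fun i _ => heq i
      _ ≤ ∫ x in ((p:ℝ) + 2)..(((p:ℝ) + 2) + (N:ℕ)), f x := h1
      _ ≤ ∫ x in Set.Ici ((p:ℝ) + 2), f x := by
          rw [intervalIntegral.integral_of_le (by have := (Nat.cast_nonneg N : (0:ℝ) ≤ N); linarith)]
          apply setIntegral_mono_set hint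
          · exact Filter.Eventually.of_forall fun x => (hfpos x).le
          · exact Filter.Eventually.of_forall fun x hx => hx.1.le
  -- combine the integrals
  have hAe : (∫ x in (1:ℝ)..(1 + (p:ℕ)), f x) = ∫ x in (1:ℝ)..((p:ℝ) + 1), f x := by
    rw [add_comm (1:ℝ) ((p:ℕ):ℝ)]
  have hintv1 : IntervalIntegrable f volume 1 ((p:ℝ) + 1) := hcont.intervalIntegrable _ _
  have hintv2 : IntervalIntegrable f volume ((p:ℝ) + 1) ((p:ℝ) + 2) :=
    hcont.intervalIntegrable _ _
  have hadj := intervalIntegral.integral_add_adjacent_intervals hintv1 hintv2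
  have hsplit : (∫ x in (1:ℝ)..((p:ℝ) + 1), f x) + (∫ x in ((p:ℝ) + 1)..((p:ℝ) + 2), f x)
      + (∫ x in Set.Ici ((p:ℝ) + 2), f x) ≤ ∫ μ in Set.Ici (1:ℝ), f μ := by
    rw [hadj]
    have hioc : (∫ x in (1:ℝ)..((p:ℝ) + 2), f x) = ∫ x in Set.Ioc (1:ℝ) ((p:ℝ) + 2), f x :=
      intervalIntegral.integral_of_le (by have := (Nat.cast_nonneg p : (0:ℝ) ≤ p); linarith)
    rw [hioc, integral_Ici_eq_integral_Ioi, integral_Ici_eq_integral_Ioi]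
    rw [← setIntegral_union (Set.Ioc_disjoint_Ioi le_rfl) measurableSet_Ioi
      ((aux_integrableOn hn).mono_set (Set.Ioc_subset_Icc_self.trans
        (Set.Icc_subset_Ici_self)))
      ((aux_integrableOn hn).mono_set (Set.Ioi_subset_Ici (by linarith)))]
    rw [Set.Ioc_union_Ioi_eq_Ioi (by have := (Nat.cast_nonneg p : (0:ℝ) ≤ p); linarith)]
  -- final assembly
  have heq1 : ((p:ℝ) : ℝ) + 1 = ((p:ℕ) : ℝ) + 1 := rfl
  have e1 : f (((p:ℕ):ℝ) + 1) = f ((p:ℝ) + 1) := rfl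
  have e2 : f (((p + 1 : ℕ) : ℝ) + 1) = f ((p:ℝ) + 2) := by push_cast; ring_nf
  rw [e2]
  rw [hAe] at hA
  linarith [hA, hB, hC, hsplit]

end stmt1aux

theorem stmt1 (n : ℝ) (hn : 1 ≤ n) :
    Summable (fun l : ℕ =>
      Real.exp (4 * π * Real.sqrt (n * (l + 1)) - Real.sqrt 3 * π * (l + 1))) ∧
    ∑' l : ℕ, Real.exp (4 * π * Real.sqrt (n * (l + 1)) - Real.sqrt 3 * π * (l + 1)) ≤
      (∫ μ in Set.Ici (1 : ℝ), Real.exp (4 * π * Real.sqrt (n * μ) - Real.sqrt 3 * π * μ)) +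
        Real.exp (4 * π * n / Real.sqrt 3) := by
  exact ⟨aux_summable hn, aux_main hn⟩
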